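/- Let G be the graph on {0,1}^5 where distinct u, v are adjacent iff 1 ≤ d_H(u,v) ≤ 2. Then any independent set of G has size at most 4. -/

import Mathlib

open SimpleGraph

def gilbert : SimpleGraph (Fin 5 → Bool) where
  Adj u v := 1 ≤ hammingDist u v ∧ hammingDist u v ≤ 2
  symm := ⟨fun u v h => ⟨hammingDist_comm v u ▸ h.1, hammingDist_comm v u ▸ h.2⟩⟩
  loopless := ⟨fun u h => by simpa [hammingDist_self] using h.1⟩

instance : DecidableRel gilbert.Adj :=
  fun u v => inferInstanceAs (Decidable (1 ≤ hammingDist u v ∧ hammingDist u v ≤ 2))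
/-- A set of vertices is independent if no two of its elements are adjacent. -/
def IsIndep {V : Type*} (G : SimpleGraph V) (s : Set V) : Prop :=
  s.Pairwise fun u v => ¬ G.Adj u v

/-- The independence number: the largest size of an independent set. -/
noncomputable def indepNum {V : Type*} [Fintype V] (G : SimpleGraph V) : ℕ :=
  sSup {n | ∃ s : Finset V, IsIndep G ↑s ∧ s.card = n}

/- Auxiliary machinery: encode vertices as naturals and run a pruned search. -/

def w (n : ℕ) : ℕ := n % 2 + n / 2 % 2 + n / 4 % 2 + n / 8 % 2 + n / 16 % 2

def compat (a b : ℕ) : Bool := decide (3 ≤ w (a ^^^ b))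

def search : List ℕ → List ℕ → ℕ → Bool
  | _, _, 0 => false
  | [], _, _+1 => true
  | x::xs, ch, k+1 =>
      (cond (ch.all (fun c => compat x c)) (search xs (x::ch) k) true)
      && search xs ch (k+1)
  termination_by structural l => l

lemma search_true : search (List.range 32) [] 5 = true := by decide

lemma search_sound (l : List ℕ) : ∀ (ch : List ℕ) (k : ℕ), search l ch k = true →
    ∀ t : Finset ℕ, (∀ x ∈ t, x ∈ l) → t.card = k →
    (∀ x ∈ t, ∀ y ∈ t, x ≠ y → compat x y = true) →
    (∀ x ∈ t, ∀ c ∈ ch, compat x c = true) → False := by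
  induction l with
  | nil =>
    intro ch k h t hmem hcard _ _
    cases k with
    | zero => simp [search] at h
    | succ k =>
      have : t = ∅ := Finset.eq_empty_of_forall_notMem fun x hx => by
        simpa using hmem x hx
      simp [this] at hcard
  | cons x xs ih =>
    intro ch k h t hmem hcard hpair hch
    cases k with
    | zero => simp [search] at h
    | succ k =>
      rw [search, Bool.and_eq_true] at h
      by_cases hx : x ∈ t
      · have hC : (ch.all (fun c => compat x c)) = true := by
          rw [List.all_eq_true]; exact fun c hc => hch x hx c hc
        rw [hC, cond_true] at h
        refine ih (x::ch) k h.1 (t.erase x) ?_ ?_ ?_ ?_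
        · intro y hy
          have hyx := Finset.ne_of_mem_erase hy
          have := hmem y (Finset.mem_of_mem_erase hy)
          simpa [hyx] using this
        · rw [Finset.card_erase_of_mem hx, hcard]; rfl
        · intro a ha b hb hab
          exact hpair a (Finset.mem_of_mem_erase ha) b (Finset.mem_of_mem_erase hb) hab
        · intro a ha c hc
          rcases List.mem_cons.mp hc with rfl | hc
          · exact hpair a (Finset.mem_of_mem_erase ha) c hx (Finset.ne_of_mem_erase ha)
          · exact hch a (Finset.mem_of_mem_erase ha) c hc
      · refine ih ch (k+1) h.2 t ?_ hcard hpair hch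
        intro y hy
        have : y ≠ x := fun hyx => hx (hyx ▸ hy)
        simpa [this] using hmem y hy

def e (u : Fin 5 → Bool) : ℕ :=
  (if u 0 then 1 else 0) + (if u 1 then 2 else 0) + (if u 2 then 4 else 0)
  + (if u 3 then 8 else 0) + (if u 4 then 16 else 0)

lemma key5 : ∀ a b c d f a' b' c' d' f' : Bool,
    hammingDist ![a,b,c,d,f] ![a',b',c',d',f'] =
      w (e ![a,b,c,d,f] ^^^ e ![a',b',c',d',f']) := by decide

lemma eta (u : Fin 5 → Bool) : u = ![u 0, u 1, u 2, u 3, u 4] := by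
  funext i; fin_cases i <;> rfl

lemma key (u v : Fin 5 → Bool) : hammingDist u v = w (e u ^^^ e v) := by
  rw [eta u, eta v]; exact key5 _ _ _ _ _ _ _ _ _ _

lemma e_lt (u : Fin 5 → Bool) : e u < 32 := by
  have h : ∀ (b : Bool) (n : ℕ), (if b then n else 0) ≤ n := by
    intro b n; cases b <;> simp
  unfold e
  have := h (u 0) 1; have := h (u 1) 2; have := h (u 2) 4
  have := h (u 3) 8; have := h (u 4) 16; omega

lemma e_inj {u v : Fin 5 → Bool} (h : e u = e v) : u = v := by
  have := key u v
  rw [h, Nat.xor_self] at this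
  exact hammingDist_eq_zero.mp (by simpa [w] using this)

theorem stmt3 (s : Finset (Fin 5 → Bool)) (hs : IsIndep gilbert ↑s) : s.card ≤ 4 := by
  by_contra h
  push_neg at h
  obtain ⟨t, hts, htcard⟩ := Finset.exists_subset_card_eq (s := s) (n := 5) (by omega)
  refine search_sound (List.range 32) [] 5 search_true (t.image e) ?_ ?_ ?_ ?_
  · intro x hx
    obtain ⟨u, _, rfl⟩ := Finset.mem_image.mp hx
    exact List.mem_range.mpr (e_lt u)
  · rw [Finset.card_image_of_injective _ fun u v => e_inj, htcard]
  · intro x hx y hy hxy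
    obtain ⟨u, hu, rfl⟩ := Finset.mem_image.mp hx
    obtain ⟨v, hv, rfl⟩ := Finset.mem_image.mp hy
    have huv : u ≠ v := fun h => hxy (h ▸ rfl)
    have hnadj : ¬ gilbert.Adj u v := hs (hts hu) (hts hv) huv
    have hd0 : hammingDist u v ≠ 0 := fun h0 => huv (hammingDist_eq_zero.mp h0)
    have hd : 3 ≤ hammingDist u v := by
      by_contra hlt
      exact hnadj ⟨by omega, by omega⟩
    rw [key] at hd
    exact decide_eq_true hd
  · intro _ _ c hc
    simp at hc
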